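/- arXiv:1705.07300 — 6 statements merged into one kernel-verified Lean document; each statement's English description precedes it below -/
import Mathlib

section
/- Let (Ω, 𝓕, μ) be a probability space, S a finite index set, X_i : Ω → ℝ measurable and ℓ_i real thresholds for i ∈ S with ∑_{i∈S} ℓ_i ≥ M for a real number M. Fix f > 0, and for each i ∈ S let c_i ≥ 0 and define the bid B_i = c_i + f·μ({ω : X_i(ω) < ℓ_i}). Then μ({ω : ∑_{i∈S} X_i(ω) < M}) ≤ (1/f)·∑_{i∈S} B_i. -/
open MeasureTheory

/-- Fixed-penalty reliability bound: with truthful bids `B i = c i + f · Pr[X i < ℓ i]`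
on fixed contracts with common penalty level `f > 0`, the probability of missing the
total reduction target `M` is at most `(1/f)` times the sum of bids. -/
theorem fixed_penalty_reliability_bound {Ω : Type*} [MeasurableSpace Ω] (μ : Measure Ω)
    [IsProbabilityMeasure μ] {ι : Type*} (S : Finset ι) (X : ι → Ω → ℝ) (ℓ : ι → ℝ)
    (M f : ℝ) (c B : ι → ℝ)
    (hX : ∀ i ∈ S, Measurable (X i))
    (hℓ : M ≤ ∑ i ∈ S, ℓ i)
    (hf : 0 < f)
    (hc : ∀ i ∈ S, 0 ≤ c i)
    (hB : ∀ i ∈ S, B i = c i + f * (μ {ω | X i ω < ℓ i}).toReal) :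
    (μ {ω | ∑ i ∈ S, X i ω < M}).toReal ≤ (1 / f) * ∑ i ∈ S, B i := by
  have hsub : {ω | ∑ i ∈ S, X i ω < M} ⊆ ⋃ i ∈ S, {ω | X i ω < ℓ i} := by
    intro ω hω
    by_contra h
    simp only [Set.mem_iUnion, Set.mem_setOf_eq, not_exists, not_lt] at h
    have : ∑ i ∈ S, ℓ i ≤ ∑ i ∈ S, X i ω := Finset.sum_le_sum h
    exact absurd (lt_of_lt_of_le hω (hℓ.trans this)) (lt_irrefl _)
  have h1 : μ {ω | ∑ i ∈ S, X i ω < M} ≤ ∑ i ∈ S, μ {ω | X i ω < ℓ i} :=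
    (measure_mono hsub).trans (measure_biUnion_finset_le S _)
  have hfin : ∀ i ∈ S, μ {ω | X i ω < ℓ i} ≠ ⊤ := fun i _ => measure_ne_top μ _
  have h2 : (μ {ω | ∑ i ∈ S, X i ω < M}).toReal ≤
      ∑ i ∈ S, (μ {ω | X i ω < ℓ i}).toReal := by
    rw [← ENNReal.toReal_sum hfin]
    exact ENNReal.toReal_mono (ENNReal.sum_ne_top.2 hfin) h1
  have h3 : ∑ i ∈ S, (μ {ω | X i ω < ℓ i}).toReal ≤ (1 / f) * ∑ i ∈ S, B i := by
    rw [Finset.mul_sum]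
    apply Finset.sum_le_sum
    intro i hi
    rw [hB i hi]
    have := hc i hi
    have hp := ENNReal.toReal_nonneg (a := μ {ω | X i ω < ℓ i})
    rw [div_mul_eq_mul_div, one_mul, le_div_iff₀ hf, mul_comm]
    nlinarith
  exact h2.trans h3
end

section
/- Let (Ω, 𝓕, μ) be a probability space, S a finite index set, and for each i ∈ S let X_i : Ω → ℝ be measurable. Fix f > 0 and 0 < α < 1, and for each i ∈ S let ℓ_i > 0, β_i > 0 with f ≥ ℓ_i(1−α)β_i, let F_i be the Cliff penalty function with parameters (ℓ_i, f, α, β_i), let c_i ≥ 0, and define the bid B_i = c_i + ∫ F_i(X_i(ω)) dμ(ω). If ∑_{i∈S} ℓ_i ≥ M for a real number M, then μ({ω : ∑_{i∈S} X_i(ω) < α·M}) ≤ (1/f)·∑_{i∈S} B_i. -/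
open MeasureTheory

/-- The Cliff penalty function with parameters `(ℓ, f, α, β)`. -/
noncomputable def cliffPenalty (ℓ f α β : ℝ) (X : ℝ) : ℝ :=
  if X < α * ℓ then f else if X < ℓ then (ℓ - X) * β else 0

lemma cliffPenalty_nonneg {ℓ f α β : ℝ} (hf : 0 ≤ f) (hβ : 0 ≤ β) (x : ℝ) :
    0 ≤ cliffPenalty ℓ f α β x := by
  unfold cliffPenalty
  split_ifs with h1 h2
  · exact hf
  · exact mul_nonneg (by linarith) hβ
  · exact le_refl 0

lemma cliffPenalty_le {ℓ f α β : ℝ} (hf : 0 ≤ f) (hβ : 0 ≤ β)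
    (hfℓ : ℓ * (1 - α) * β ≤ f) (x : ℝ) :
    cliffPenalty ℓ f α β x ≤ f := by
  unfold cliffPenalty
  split_ifs with h1 h2
  · exact le_refl f
  · push_neg at h1
    have : (ℓ - x) * β ≤ ℓ * (1 - α) * β := by nlinarith
    linarith
  · exact hf

lemma cliffPenalty_measurable (ℓ f α β : ℝ) :
    Measurable (cliffPenalty ℓ f α β) := by
  unfold cliffPenalty
  apply Measurable.ite (measurableSet_lt measurable_id measurable_const) measurable_const
  apply Measurable.ite (measurableSet_lt measurable_id measurable_const)
  · exact ((measurable_const.sub measurable_id).mul measurable_const)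
  · exact measurable_const

/-- Cliff-contract reliability bound: with truthful bids
`B i = c i + E[F_i(X_i)]` on Cliff contracts `(ℓ i, f, α, β i)` sharing the same
`f > 0` and `0 < α < 1`, if the commitments sum to at least `M`, then the probability
that the total realized reduction falls below `α·M` is at most `(1/f)` times the
sum of bids. -/
theorem cliff_reliability_bound {Ω : Type*} [MeasurableSpace Ω] (μ : Measure Ω)
    [IsProbabilityMeasure μ] {ι : Type*} (S : Finset ι) (X : ι → Ω → ℝ)
    (f α M : ℝ) (ℓ β c B : ι → ℝ)
    (hX : ∀ i ∈ S, Measurable (X i))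
    (hf : 0 < f) (hα0 : 0 < α) (hα1 : α < 1)
    (hℓ : ∀ i ∈ S, 0 < ℓ i) (hβ : ∀ i ∈ S, 0 < β i)
    (hfℓ : ∀ i ∈ S, ℓ i * (1 - α) * β i ≤ f)
    (hc : ∀ i ∈ S, 0 ≤ c i)
    (hB : ∀ i ∈ S, B i = c i + ∫ ω, cliffPenalty (ℓ i) f α (β i) (X i ω) ∂μ)
    (hM : M ≤ ∑ i ∈ S, ℓ i) :
    (μ {ω | ∑ i ∈ S, X i ω < α * M}).toReal ≤ (1 / f) * ∑ i ∈ S, B i := by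
  set g : Ω → ℝ := fun ω => ∑ i ∈ S, cliffPenalty (ℓ i) f α (β i) (X i ω) with hg
  have hFmeas : ∀ i ∈ S, Measurable fun ω => cliffPenalty (ℓ i) f α (β i) (X i ω) :=
    fun i hi => (cliffPenalty_measurable _ _ _ _).comp (hX i hi)
  have hFint : ∀ i ∈ S, Integrable (fun ω => cliffPenalty (ℓ i) f α (β i) (X i ω)) μ := by
    intro i hi
    refine (integrable_const f).mono' (hFmeas i hi).aestronglyMeasurable ?_
    filter_upwards with ω
    rw [Real.norm_eq_abs, abs_of_nonneg (cliffPenalty_nonneg hf.le (hβ i hi).le _)]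
    exact cliffPenalty_le hf.le (hβ i hi).le (hfℓ i hi) _
  have hgint : Integrable g μ := integrable_finset_sum S hFint
  have hg0 : ∀ ω, 0 ≤ g ω := fun ω =>
    Finset.sum_nonneg fun i hi => cliffPenalty_nonneg hf.le (hβ i hi).le _
  set A : Set Ω := {ω | ∑ i ∈ S, X i ω < α * M} with hA
  have hAmeas : MeasurableSet A :=
    measurableSet_lt (Finset.measurable_sum S hX) measurable_const
  -- on A, g ≥ f
  have hkey : ∀ ω ∈ A, f ≤ g ω := by
    intro ω hω
    have hlt : ∑ i ∈ S, X i ω < α * M := hω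
    by_cases hex : ∃ i ∈ S, X i ω < α * ℓ i
    · obtain ⟨i, hi, hxi⟩ := hex
      have h1 : cliffPenalty (ℓ i) f α (β i) (X i ω) = f := if_pos hxi
      calc f = cliffPenalty (ℓ i) f α (β i) (X i ω) := h1.symm
        _ ≤ g ω := Finset.single_le_sum (f := fun j => cliffPenalty (ℓ j) f α (β j) (X j ω))
            (fun j hj => cliffPenalty_nonneg hf.le (hβ j hj).le _) hi
    · push_neg at hex
      exfalso
      have : α * M ≤ ∑ i ∈ S, X i ω := by
        calc α * M ≤ α * ∑ i ∈ S, ℓ i := by nlinarith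
          _ = ∑ i ∈ S, α * ℓ i := Finset.mul_sum _ _ _
          _ ≤ ∑ i ∈ S, X i ω := Finset.sum_le_sum hex
      linarith
  -- f * μ(A) ≤ ∫ g
  have h1 : f * (μ A).toReal ≤ ∫ ω, g ω ∂μ := by
    have h2 : ∫ ω in A, (f : ℝ) ∂μ ≤ ∫ ω in A, g ω ∂μ := by
      apply setIntegral_mono_on (integrableOn_const (measure_ne_top μ A))
        hgint.integrableOn hAmeas
      exact hkey
    have h3 : ∫ ω in A, (f : ℝ) ∂μ = (μ A).toReal * f := by
      simp [Measure.restrict_apply_univ, Measure.real]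
    have h4 : ∫ ω in A, g ω ∂μ ≤ ∫ ω, g ω ∂μ :=
      setIntegral_le_integral hgint (Filter.Eventually.of_forall hg0)
    linarith [h3 ▸ h2]
  -- ∫ g ≤ ∑ B
  have h5 : ∫ ω, g ω ∂μ ≤ ∑ i ∈ S, B i := by
    rw [integral_finset_sum S hFint]
    apply Finset.sum_le_sum
    intro i hi
    rw [hB i hi]
    linarith [hc i hi]
  rw [one_div, inv_mul_eq_div, le_div_iff₀ hf]
  linarith
end

section
/- Let (Ω, 𝓕, μ) be a probability space, S a finite index set, and for each i ∈ S let X_i : Ω → ℝ be measurable. Fix f > 0 and 0 < α < 1, and for each i ∈ S let ℓ_i > 0, β_i > 0 with f ≥ ℓ_i(1−α)β_i, let F_i be the Cliff penalty function with parameters (ℓ_i, f, α, β_i), let c_i ≥ 0, and define the bid B_i = c_i + ∫ F_i(X_i(ω)) dμ(ω). If ∑_{i∈S} ℓ_i ≥ M/α for a real number M > 0, then μ({ω : ∑_{i∈S} X_i(ω) < M}) ≤ (1/f)·∑_{i∈S} B_i. -/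
open MeasureTheory

/-- Safety-margin corollary of the Cliff-contract reliability bound: signing Cliff
contracts `(ℓ i, f, α, β i)` (same `f > 0` and `0 < α < 1`) whose commitments sum to
at least `M / α` bounds the probability of missing the actual goal `M > 0` by
`(1/f)` times the sum of the truthful bids `B i = c i + E[F_i(X_i)]`. -/
theorem cliff_safety_margin_bound {Ω : Type*} [MeasurableSpace Ω] (μ : Measure Ω)
    [IsProbabilityMeasure μ] {ι : Type*} (S : Finset ι) (X : ι → Ω → ℝ)
    (f α M : ℝ) (ℓ β c B : ι → ℝ)
    (hX : ∀ i ∈ S, Measurable (X i))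
    (hf : 0 < f) (hα0 : 0 < α) (hα1 : α < 1)
    (hℓ : ∀ i ∈ S, 0 < ℓ i) (hβ : ∀ i ∈ S, 0 < β i)
    (hfℓ : ∀ i ∈ S, ℓ i * (1 - α) * β i ≤ f)
    (hc : ∀ i ∈ S, 0 ≤ c i)
    (hB : ∀ i ∈ S, B i = c i + ∫ ω, cliffPenalty (ℓ i) f α (β i) (X i ω) ∂μ)
    (hM : 0 < M) (hMargin : M / α ≤ ∑ i ∈ S, ℓ i) :
    (μ {ω | ∑ i ∈ S, X i ω < M}).toReal ≤ (1 / f) * ∑ i ∈ S, B i := by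
  classical
  set A : ι → Set Ω := fun i => {ω | X i ω < α * ℓ i} with hA
  have hAmeas : ∀ i ∈ S, MeasurableSet (A i) := fun i hi =>
    measurableSet_lt (hX i hi) measurable_const
  have hInt : ∀ i ∈ S, Integrable (fun ω => cliffPenalty (ℓ i) f α (β i) (X i ω)) μ := by
    intro i hi
    refine Integrable.mono' (integrable_const f)
      (((cliffPenalty_measurable _ _ _ _).comp (hX i hi)).aestronglyMeasurable) ?_
    filter_upwards with ω
    rw [Real.norm_eq_abs, abs_of_nonneg (cliffPenalty_nonneg hf.le (hβ i hi).le _)]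
    exact cliffPenalty_le hf.le (hβ i hi).le (hfℓ i hi) _
  have key : ∀ i ∈ S, (μ (A i)).toReal ≤ (1 / f) * B i := by
    intro i hi
    have h1 : f * (μ (A i)).toReal ≤ ∫ ω, cliffPenalty (ℓ i) f α (β i) (X i ω) ∂μ := by
      have hind : ∫ ω, (A i).indicator (fun _ => f) ω ∂μ = f * (μ (A i)).toReal := by
        rw [integral_indicator_const _ (hAmeas i hi)]
        simp [mul_comm, Measure.real]
      rw [← hind]
      refine integral_mono (integrable_const f |>.indicator (hAmeas i hi)) (hInt i hi) ?_
      intro ω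
      by_cases hω : ω ∈ A i
      · simp only [Set.indicator_of_mem hω]
        have : X i ω < α * ℓ i := hω
        simp [cliffPenalty, this]
      · simp only [Set.indicator_of_notMem hω]
        exact cliffPenalty_nonneg hf.le (hβ i hi).le _
    have h2 : ∫ ω, cliffPenalty (ℓ i) f α (β i) (X i ω) ∂μ ≤ B i := by
      rw [hB i hi]; linarith [hc i hi]
    have h3 : (μ (A i)).toReal ≤ B i / f := by
      rw [le_div_iff₀ hf]
      nlinarith [mul_comm ((μ (A i)).toReal) f]
    calc (μ (A i)).toReal ≤ B i / f := h3
      _ = (1 / f) * B i := by ring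
  have hsub : {ω | ∑ i ∈ S, X i ω < M} ⊆ ⋃ i ∈ S, A i := by
    intro ω hω
    by_contra h
    simp only [Set.mem_iUnion, Set.mem_setOf_eq, not_exists, not_lt, hA] at h
    have hge : ∀ i ∈ S, α * ℓ i ≤ X i ω := fun i hi => h i hi
    have h1 : M ≤ α * ∑ i ∈ S, ℓ i := by
      have := (div_le_iff₀ hα0).mp hMargin
      linarith [this]
    have h2 : α * ∑ i ∈ S, ℓ i ≤ ∑ i ∈ S, X i ω := by
      rw [Finset.mul_sum]
      exact Finset.sum_le_sum hge
    have : ∑ i ∈ S, X i ω < M := hω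
    linarith
  have hfin : ∀ i ∈ S, μ (A i) ≠ ⊤ := fun i _ => measure_ne_top μ _
  calc (μ {ω | ∑ i ∈ S, X i ω < M}).toReal
      ≤ (μ (⋃ i ∈ S, A i)).toReal :=
        ENNReal.toReal_mono (measure_ne_top μ _) (measure_mono hsub)
    _ ≤ (∑ i ∈ S, μ (A i)).toReal :=
        ENNReal.toReal_mono (ENNReal.sum_lt_top.mpr fun i _ => measure_lt_top μ _).ne
          (measure_biUnion_finset_le S A)
    _ = ∑ i ∈ S, (μ (A i)).toReal := ENNReal.toReal_sum hfin
    _ ≤ ∑ i ∈ S, (1 / f) * B i := Finset.sum_le_sum key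
    _ = (1 / f) * ∑ i ∈ S, B i := (Finset.mul_sum _ _ _).symm
end

section
/- In the DR-VCG setting, let i be a fixed agent with true costs C_i : J → ℝ with C_i(j) ≥ 0 for all j, let the other agents' bids B_{i'} : J → ℝ (nonnegative) be arbitrary, and let B' : J → ℝ be any alternative bid for agent i. Let σ* be any feasible assignment minimizing SB under the profile in which agent i bids C_i, and let σ' be any feasible assignment minimizing SB under the profile in which agent i bids B'. Then u_i(σ*) ≥ u_i(σ'), where in each case the payment r_i is computed with the Clarke pivot rule under the respective bid profile and u_i(σ) = r_i − C_i(j) if σ(i) = some j and u_i(σ) = r_i if σ(i) = none. Hence truthful bidding is a dominant strategy. -/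
open Finset

/-- An assignment of contracts is feasible if the declared commitments of the assigned
contracts sum to at least the reduction target `M`. -/
def Feasible {N J : Type*} [Fintype N] (ℓ : J → ℕ) (M : ℕ) (σ : N → Option J) : Prop :=
  M ≤ ∑ i, Option.elim (σ i) 0 ℓ

/-- The sum of bids of an assignment. -/
def SB {N J : Type*} [Fintype N] (B : N → J → ℝ) (σ : N → Option J) : ℝ :=
  ∑ i, Option.elim (σ i) 0 (B i)

/-- The sum of bids of an assignment, omitting agent `i`. -/
def SBminus {N J : Type*} [Fintype N] [DecidableEq N] (B : N → J → ℝ) (i : N)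
    (σ : N → Option J) : ℝ :=
  ∑ i' ∈ Finset.univ.erase i, Option.elim (σ i') 0 (B i')

/-- `OPTminus ℓ M B i` is the minimum sum of bids over feasible assignments in which
agent `i` is not selected. -/
noncomputable def OPTminus {N J : Type*} [Fintype N] (ℓ : J → ℕ) (M : ℕ)
    (B : N → J → ℝ) (i : N) : ℝ :=
  sInf {x | ∃ σ : N → Option J, Feasible ℓ M σ ∧ σ i = none ∧ SB B σ = x}

/-- The Clarke-pivot payment to agent `i` given an `SB`-minimizing feasible
assignment `σstar`. -/
noncomputable def clarke {N J : Type*} [Fintype N] [DecidableEq N] (ℓ : J → ℕ) (M : ℕ)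
    (B : N → J → ℝ) (i : N) (σstar : N → Option J) : ℝ :=
  OPTminus ℓ M B i - SBminus B i σstar

lemma SB_split {N J : Type*} [Fintype N] [DecidableEq N] (B : N → J → ℝ) (i : N)
    (f : J → ℝ) (σ : N → Option J) :
    SB (Function.update B i f) σ = SBminus B i σ + Option.elim (σ i) 0 f := by
  unfold SB SBminus
  rw [← Finset.add_sum_erase _ _ (Finset.mem_univ i), Function.update_self, add_comm]
  congr 1
  exact Finset.sum_congr rfl fun i' hi' => by
    rw [Function.update_of_ne (Finset.ne_of_mem_erase hi')]

lemma OPTminus_update_eq {N J : Type*} [Fintype N] [DecidableEq N] (ℓ : J → ℕ) (M : ℕ)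
    (B : N → J → ℝ) (i : N) (f g : J → ℝ) :
    OPTminus ℓ M (Function.update B i f) i = OPTminus ℓ M (Function.update B i g) i := by
  unfold OPTminus
  congr 1
  ext x
  constructor <;> rintro ⟨σ, hfe, hn, hs⟩ <;> exact ⟨σ, hfe, hn, by
    rw [← hs, SB_split, SB_split, hn]; rfl⟩

/-- Truthfulness of DR-VCG: agent `i`'s utility when bidding its true costs `C`
(at any `SB`-minimizing feasible assignment `σstar`, with Clarke-pivot payment)
is at least its utility when submitting any alternative bid `B'` (at any
`SB`-minimizing feasible assignment `σ'` for the deviating profile). -/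
theorem drvcg_truthful {N J : Type*} [Fintype N] [DecidableEq N] [Fintype J]
    (ℓ : J → ℕ) (M : ℕ) (i : N) (C B' : J → ℝ) (B : N → J → ℝ)
    (hC : ∀ j, 0 ≤ C j) (hB : ∀ i' j, 0 ≤ B i' j)
    (hnone : ∀ i0 : N, ∃ σ : N → Option J, Feasible ℓ M σ ∧ σ i0 = none)
    (σstar σ' : N → Option J)
    (hstar_feas : Feasible ℓ M σstar)
    (hstar_opt : ∀ σ, Feasible ℓ M σ →
      SB (Function.update B i C) σstar ≤ SB (Function.update B i C) σ)
    (h'_feas : Feasible ℓ M σ')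
    (h'_opt : ∀ σ, Feasible ℓ M σ →
      SB (Function.update B i B') σ' ≤ SB (Function.update B i B') σ) :
    clarke ℓ M (Function.update B i B') i σ' - Option.elim (σ' i) 0 C ≤
      clarke ℓ M (Function.update B i C) i σstar - Option.elim (σstar i) 0 C := by
  unfold clarke
  rw [OPTminus_update_eq ℓ M B i B' C]
  have h1 : SBminus B i σ' = SBminus (Function.update B i B') i σ' := by
    unfold SBminus
    exact Finset.sum_congr rfl fun i' hi' => by
      rw [Function.update_of_ne (Finset.ne_of_mem_erase hi')]
  have h2 : SBminus B i σstar = SBminus (Function.update B i C) i σstar := by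
    unfold SBminus
    exact Finset.sum_congr rfl fun i' hi' => by
      rw [Function.update_of_ne (Finset.ne_of_mem_erase hi')]
  have key := hstar_opt σ' h'_feas
  rw [SB_split, SB_split] at key
  rw [← h1, ← h2]
  linarith
end

section
/- In the DR-VCG setting with arbitrary nonnegative bids B, let σ* be any feasible assignment minimizing SB. If σ*(i) = some j for an agent i and contract j, then the Clarke-pivot payment satisfies r_i ≥ B(i)(j); that is, every selected agent is paid at least its bid on its assigned contract. -/
open Finset

/-- Every selected agent is paid at least its bid on its assigned contract: if `σstar`
is an `SB`-minimizing feasible assignment and `σstar i = some j`, then the Clarke-pivot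
payment to `i` is at least `B i j`. -/
theorem drvcg_payment_ge_bid {N J : Type*} [Fintype N] [DecidableEq N] [Fintype J]
    (ℓ : J → ℕ) (M : ℕ) (B : N → J → ℝ)
    (hB : ∀ i' j, 0 ≤ B i' j)
    (hnone : ∀ i0 : N, ∃ σ : N → Option J, Feasible ℓ M σ ∧ σ i0 = none)
    (σstar : N → Option J)
    (hstar_feas : Feasible ℓ M σstar)
    (hstar_opt : ∀ σ, Feasible ℓ M σ → SB B σstar ≤ SB B σ)
    (i : N) (j : J) (hij : σstar i = some j) :
    B i j ≤ clarke ℓ M B i σstar := by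
  have hsplit : SB B σstar = B i j + SBminus B i σstar := by
    unfold SB SBminus
    rw [← Finset.add_sum_erase _ _ (Finset.mem_univ i), hij]
    rfl
  have hle : SB B σstar ≤ OPTminus ℓ M B i := by
    apply le_csInf
    · obtain ⟨σ, hf, hn⟩ := hnone i
      exact ⟨SB B σ, σ, hf, hn, rfl⟩
    · rintro x ⟨σ, hf, hn, rfl⟩
      exact hstar_opt σ hf
  unfold clarke
  linarith
end

section
/- Let n, k be natural numbers, ℓ : Fin k → ℕ commitments, and B : Fin n → Fin k → ℝ nonnegative bids. For t ≤ n and m ∈ ℕ, let A(t, m) be the set of assignments σ : Fin n → Option (Fin k) such that σ(i) = none for all i with i ≥ t, and ∑_{i : σ(i) = some j} ℓ(j) = m; let OPT(t, m) ∈ WithTop ℝ be the infimum of SB(σ) = ∑_{i : σ(i) = some j} B(i)(j) over σ ∈ A(t, m) (with value ⊤ if A(t, m) is empty). Then for every t < n and every m: OPT(t+1, m) = min( OPT(t, m), min over contracts j with ℓ(j) ≤ m of ( OPT(t, m − ℓ(j)) + B(t)(j) ) ). -/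
open Finset

/-- `dpOPT n k ℓ B t m` is the minimum sum of bids over assignments `σ` that assign
contracts only to agents of index `< t` and whose commitments sum to exactly `m`
(and is `⊤` if no such assignment exists). -/
noncomputable def dpOPT (n k : ℕ) (ℓ : Fin k → ℕ) (B : Fin n → Fin k → ℝ)
    (t m : ℕ) : WithTop ℝ :=
  (Finset.univ.filter (fun σ : Fin n → Option (Fin k) =>
      (∀ i : Fin n, t ≤ (i : ℕ) → σ i = none) ∧
      ∑ i, Option.elim (σ i) 0 ℓ = m)).inf
    (fun σ => ((∑ i, Option.elim (σ i) 0 (B i) : ℝ) : WithTop ℝ))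

/-- Bellman recurrence for the demand-response knapsack dynamic program: the optimum
using the first `t + 1` agents for exact commitment `m` is the minimum of the optimum
without agent `t`, and, over all contracts `j` with `ℓ j ≤ m`, of the optimum for the
first `t` agents and commitment `m - ℓ j` plus agent `t`'s bid on `j`. -/
theorem dpOPT_recurrence (n k : ℕ) (ℓ : Fin k → ℕ) (B : Fin n → Fin k → ℝ)
    (hB : ∀ i j, 0 ≤ B i j) (t : ℕ) (ht : t < n) (m : ℕ) :
    dpOPT n k ℓ B (t + 1) m =
      min (dpOPT n k ℓ B t m)
        ((Finset.univ.filter (fun j : Fin k => ℓ j ≤ m)).inf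
          (fun j => dpOPT n k ℓ B t (m - ℓ j) + ((B ⟨t, ht⟩ j : ℝ) : WithTop ℝ))) := by
  classical
  set a : Fin n := ⟨t, ht⟩ with ha
  have hav : (a : ℕ) = t := rfl
  -- generic update-sum lemma
  have key : ∀ {M : Type} [AddCommMonoid M] (g : Fin n → Option (Fin k) → M)
      (σ : Fin n → Option (Fin k)) (v : Option (Fin k)),
      ∑ i, g i (Function.update σ a v i)
        = g a v + ∑ i ∈ Finset.univ.erase a, g i (σ i) := by
    intro M _ g σ v
    rw [← Finset.add_sum_erase _ (fun i => g i (Function.update σ a v i))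
        (Finset.mem_univ a)]
    congr 1
    · rw [Function.update_self]
    · exact Finset.sum_congr rfl fun i hi => by
        rw [Function.update_of_ne (Finset.ne_of_mem_erase hi)]
  have split : ∀ {M : Type} [AddCommMonoid M] (g : Fin n → Option (Fin k) → M)
      (σ : Fin n → Option (Fin k)),
      ∑ i, g i (σ i) = g a (σ a) + ∑ i ∈ Finset.univ.erase a, g i (σ i) := by
    intro M _ g σ
    rw [← Finset.add_sum_erase _ (fun i => g i (σ i)) (Finset.mem_univ a)]
  apply le_antisymm
  · apply le_min
    · apply Finset.inf_mono
      intro σ hσ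
      simp only [Finset.mem_filter, Finset.mem_univ, true_and] at hσ ⊢
      exact ⟨fun i hi => hσ.1 i (Nat.le_of_succ_le hi), hσ.2⟩
    · apply Finset.le_inf
      intro j hj
      simp only [Finset.mem_filter, Finset.mem_univ, true_and] at hj
      set s := (Finset.univ.filter (fun σ : Fin n → Option (Fin k) =>
          (∀ i : Fin n, t ≤ (i : ℕ) → σ i = none) ∧
          ∑ i, Option.elim (σ i) 0 ℓ = m - ℓ j)) with hs
      rcases s.eq_empty_or_nonempty with he | hne
      · have : dpOPT n k ℓ B t (m - ℓ j) = ⊤ := by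
          rw [dpOPT, ← hs, he, Finset.inf_empty]
        rw [this, top_add]
        exact le_top
      · obtain ⟨σ, hσs, hval⟩ := Finset.exists_mem_eq_inf s hne
          (fun σ => ((∑ i, Option.elim (σ i) 0 (B i) : ℝ) : WithTop ℝ))
        rw [hs, Finset.mem_filter] at hσs
        obtain ⟨-, hsup, hsum⟩ := hσs
        have hdp : dpOPT n k ℓ B t (m - ℓ j)
            = ((∑ i, Option.elim (σ i) 0 (B i) : ℝ) : WithTop ℝ) := by
          rw [dpOPT, ← hs, hval]
        have hσa : σ a = none := hsup a (le_refl t)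
        -- candidate assignment
        set σ' := Function.update σ a (some j) with hσ'
        have hmem : σ' ∈ (Finset.univ.filter (fun σ : Fin n → Option (Fin k) =>
            (∀ i : Fin n, t + 1 ≤ (i : ℕ) → σ i = none) ∧
            ∑ i, Option.elim (σ i) 0 ℓ = m)) := by
          rw [Finset.mem_filter]
          refine ⟨Finset.mem_univ _, fun i hi => ?_, ?_⟩
          · have hia : i ≠ a := by
              intro h; rw [h, hav] at hi; omega
            rw [hσ', Function.update_of_ne hia]
            exact hsup i (Nat.le_of_succ_le hi)
          · rw [hσ', key (fun _ x => Option.elim x 0 ℓ) σ (some j)]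
            have : ∑ i ∈ Finset.univ.erase a, Option.elim (σ i) 0 ℓ
                = m - ℓ j := by
              have := split (fun _ x => Option.elim x 0 ℓ) σ
              rw [hσa] at this
              simpa using this.symm.trans hsum
            rw [this]
            simp only [Option.elim_some]
            omega
        have hSB : (∑ i, Option.elim (σ' i) 0 (B i) : ℝ)
            = (∑ i, Option.elim (σ i) 0 (B i)) + B a j := by
          rw [hσ', key (fun i x => Option.elim x 0 (B i)) σ (some j)]
          have := split (fun i x => Option.elim x 0 (B i)) σ
          rw [hσa] at this
          simp only [Option.elim_none, Option.elim_some] at this ⊢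
          rw [show (∑ i, Option.elim (σ i) 0 (B i) : ℝ)
              = ∑ i ∈ Finset.univ.erase a, Option.elim (σ i) 0 (B i) by
            simpa using this]
          ring
        calc dpOPT n k ℓ B (t + 1) m
            ≤ ((∑ i, Option.elim (σ' i) 0 (B i) : ℝ) : WithTop ℝ) :=
              Finset.inf_le hmem
          _ = dpOPT n k ℓ B t (m - ℓ j) + ((B a j : ℝ) : WithTop ℝ) := by
              rw [hdp, hSB, ← WithTop.coe_add]
  · apply Finset.le_inf
    intro σ hσ
    rw [Finset.mem_filter] at hσ
    obtain ⟨-, hsup, hsum⟩ := hσ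
    cases hcase : σ a with
    | none =>
      refine le_trans (min_le_left _ _) (Finset.inf_le ?_)
      rw [Finset.mem_filter]
      refine ⟨Finset.mem_univ _, fun i hi => ?_, hsum⟩
      rcases Nat.lt_or_ge (i : ℕ) (t + 1) with h | h
      · have : i = a := Fin.ext (by rw [hav]; omega)
        rw [this, hcase]
      · exact hsup i h
    | some j =>
      have hsplitℓ := split (fun _ x => Option.elim x 0 ℓ) σ
      rw [hcase] at hsplitℓ
      simp only [Option.elim_some] at hsplitℓ
      have hrest : ∑ i ∈ Finset.univ.erase a, Option.elim (σ i) 0 ℓ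
          = m - ℓ j := by omega
      have hℓj : ℓ j ≤ m := by omega
      set σ' := Function.update σ a none with hσ'
      have hmem : σ' ∈ (Finset.univ.filter (fun σ : Fin n → Option (Fin k) =>
          (∀ i : Fin n, t ≤ (i : ℕ) → σ i = none) ∧
          ∑ i, Option.elim (σ i) 0 ℓ = m - ℓ j)) := by
        rw [Finset.mem_filter]
        refine ⟨Finset.mem_univ _, fun i hi => ?_, ?_⟩
        · rcases eq_or_ne i a with h | h
          · rw [h, hσ', Function.update_self]
          · rw [hσ', Function.update_of_ne h]
            have : t + 1 ≤ (i : ℕ) := by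
              rcases Nat.lt_or_ge (i : ℕ) (t + 1) with h' | h'
              · exact absurd (Fin.ext (by rw [hav]; omega) : i = a) h
              · exact h'
            exact hsup i this
        · rw [hσ', key (fun _ x => Option.elim x 0 ℓ) σ none]
          simpa using hrest
      have hSB : (∑ i, Option.elim (σ i) 0 (B i) : ℝ)
          = (∑ i, Option.elim (σ' i) 0 (B i)) + B a j := by
        rw [hσ', key (fun i x => Option.elim x 0 (B i)) σ none]
        have := split (fun i x => Option.elim x 0 (B i)) σ
        rw [hcase] at this
        simp only [Option.elim_none, Option.elim_some] at this ⊢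
        rw [this]; ring
      refine le_trans (min_le_right _ _) ?_
      refine le_trans (Finset.inf_le (by
        simp only [Finset.mem_filter, Finset.mem_univ, true_and]; exact hℓj)) ?_
      have h1 : dpOPT n k ℓ B t (m - ℓ j)
          ≤ ((∑ i, Option.elim (σ' i) 0 (B i) : ℝ) : WithTop ℝ) :=
        Finset.inf_le hmem
      calc dpOPT n k ℓ B t (m - ℓ j) + ((B a j : ℝ) : WithTop ℝ)
          ≤ ((∑ i, Option.elim (σ' i) 0 (B i) : ℝ) : WithTop ℝ)
            + ((B a j : ℝ) : WithTop ℝ) := add_le_add_left h1 _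
        _ = ((∑ i, Option.elim (σ i) 0 (B i) : ℝ) : WithTop ℝ) := by
            rw [← WithTop.coe_add, hSB]
end
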